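/- arXiv:1709.04597 — 3 statements merged into one kernel-verified Lean document; each statement's English description precedes it below -/
import Mathlib

section
/- Let A be a C*-algebra and let a, b be positive elements of A. Then a is Cuntz subequivalent to b if and only if for every ε > 0 there exist δ > 0 and x ∈ A such that (a − ε)₊ = x* (b − δ)₊ x. -/
open Filter Topology
open scoped ENNReal NNReal

variable {A : Type*}

/-- Cuntz subequivalence: `a ≾ b` iff `vₙ * b * vₙ* → a` for some sequence `vₙ`. -/
def CuntzSub [NonUnitalRing A] [StarRing A] [TopologicalSpace A] (a b : A) : Prop :=
  ∃ v : ℕ → A, Tendsto (fun n => v n * b * star (v n)) atTop (nhds a)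

/-- Cuntz equivalence. -/
def CuntzEquiv [NonUnitalRing A] [StarRing A] [TopologicalSpace A] (a b : A) : Prop :=
  CuntzSub a b ∧ CuntzSub b a

/-- `(a - ε)₊`, the positive part of `a - ε`, via continuous functional calculus. -/
noncomputable def cutoff [CStarAlgebra A] (ε : ℝ) (a : A) : A :=
  cfc (fun t : ℝ => max (t - ε) 0) a

/-!
### Scalar (real-valued) auxiliary lemmas
-/

/-- The fourth root, as iterated square roots. -/
noncomputable def sq4 (t : ℝ) : ℝ := Real.sqrt (Real.sqrt t)

lemma sq4_nonneg (t : ℝ) : 0 ≤ sq4 t := Real.sqrt_nonneg _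

lemma sq4_mul_self (t : ℝ) : sq4 t * sq4 t = Real.sqrt t :=
  Real.mul_self_sqrt (Real.sqrt_nonneg t)

lemma sq4_sq (t : ℝ) : sq4 t ^ 2 = Real.sqrt t := by
  rw [sq, sq4_mul_self]

lemma sq4_mono {s t : ℝ} (h : s ≤ t) : sq4 s ≤ sq4 t :=
  Real.sqrt_le_sqrt (Real.sqrt_le_sqrt h)

lemma sq4_pos {t : ℝ} (h : 0 < t) : 0 < sq4 t :=
  Real.sqrt_pos.mpr (Real.sqrt_pos.mpr h)

lemma sq4_zero : sq4 0 = 0 := by simp [sq4]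

lemma sq4_one : sq4 1 = 1 := by simp [sq4]

lemma sq4_continuous : Continuous sq4 :=
  Real.continuous_sqrt.comp Real.continuous_sqrt

lemma sqrt_sub_sqrt_le {x y : ℝ} (h0 : 0 ≤ y) (h : y ≤ x) :
    Real.sqrt x - Real.sqrt y ≤ Real.sqrt (x - y) := by
  have hx : 0 ≤ x := h0.trans h
  have key : x ≤ (Real.sqrt (x - y) + Real.sqrt y) ^ 2 := by
    nlinarith [Real.sq_sqrt (sub_nonneg.2 h), Real.sq_sqrt h0,
      Real.sqrt_nonneg (x - y), Real.sqrt_nonneg y,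
      mul_nonneg (Real.sqrt_nonneg (x - y)) (Real.sqrt_nonneg y)]
  have := Real.sqrt_le_sqrt key
  rw [Real.sqrt_sq (by positivity)] at this
  linarith

lemma sq4_sub_sq4_le {x y : ℝ} (h0 : 0 ≤ y) (h : y ≤ x) :
    sq4 x - sq4 y ≤ sq4 (x - y) := by
  have h1 : Real.sqrt y ≤ Real.sqrt x := Real.sqrt_le_sqrt h
  have h2 : sq4 x - sq4 y ≤ Real.sqrt (Real.sqrt x - Real.sqrt y) :=
    sqrt_sub_sqrt_le (Real.sqrt_nonneg y) h1
  refine h2.trans (Real.sqrt_le_sqrt ?_)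
  exact sqrt_sub_sqrt_le h0 h

lemma abs_sq4_sub_sq4 {x y c : ℝ} (hx : 0 ≤ x) (hy : 0 ≤ y) (hc : 0 ≤ c)
    (hxy : |x - y| ≤ c) : |sq4 x - sq4 y| ≤ sq4 c := by
  rcases le_total y x with h | h
  · rw [abs_of_nonneg (sub_nonneg.2 (sq4_mono h))]
    refine (sq4_sub_sq4_le hy h).trans (sq4_mono ?_)
    rwa [abs_of_nonneg (sub_nonneg.2 h)] at hxy
  · rw [abs_of_nonpos (sub_nonpos.2 (sq4_mono h)), neg_sub]
    refine (sq4_sub_sq4_le hx h).trans (sq4_mono ?_)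
    rwa [abs_of_nonpos (sub_nonpos.2 h), neg_sub] at hxy

/-- Scalar estimate for the Cauchy property in the quarter-power factorization. -/
lemma scalar_cauchy_quarter {η₁ η₂ ηN t : ℝ} (h1 : 0 < η₁) (h2 : 0 < η₂)
    (hN1 : η₁ ≤ ηN) (hN2 : η₂ ≤ ηN) (ht : 0 ≤ t) :
    (1 / sq4 (t + η₁) - 1 / sq4 (t + η₂)) * t * (1 / sq4 (t + η₁) - 1 / sq4 (t + η₂))
      ≤ Real.sqrt ηN := by
  have hηN : 0 < ηN := h1.trans_le hN1
  set a := sq4 (t + η₁) with ha_def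
  set b := sq4 (t + η₂) with hb_def
  have ha : 0 < a := sq4_pos (by linarith)
  have hb : 0 < b := sq4_pos (by linarith)
  have hdiff : 1 / a - 1 / b = (b - a) / (a * b) := by
    field_simp
  have hba : |b - a| ≤ sq4 ηN := by
    have := abs_sq4_sub_sq4 (x := t + η₂) (y := t + η₁) (by linarith) (by linarith) hηN.le
      (by rw [show t + η₂ - (t + η₁) = η₂ - η₁ by ring]; rw [abs_le]; constructor <;> nlinarith)
    exact this
  have hba2 : (b - a) ^ 2 ≤ Real.sqrt ηN := by
    calc (b - a) ^ 2 = |b - a| ^ 2 := (sq_abs _).symm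
      _ ≤ sq4 ηN ^ 2 := by
          exact pow_le_pow_left₀ (abs_nonneg _) hba 2
      _ = Real.sqrt ηN := sq4_sq ηN
  have hab2 : t ≤ (a * b) ^ 2 := by
    have h1' : a ^ 2 = Real.sqrt (t + η₁) := sq4_sq _
    have h2' : b ^ 2 = Real.sqrt (t + η₂) := sq4_sq _
    have h3 : (a * b) ^ 2 = Real.sqrt ((t + η₁) * (t + η₂)) := by
      rw [mul_pow, h1', h2', ← Real.sqrt_mul (by linarith)]
    rw [h3]
    calc t = Real.sqrt (t * t) := (Real.sqrt_mul_self ht).symm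
      _ ≤ Real.sqrt ((t + η₁) * (t + η₂)) := Real.sqrt_le_sqrt (by nlinarith)
  rw [hdiff]
  have habpos : 0 < a * b := mul_pos ha hb
  have key : (b - a) / (a * b) * t * ((b - a) / (a * b)) = t * (b - a) ^ 2 / (a * b) ^ 2 := by
    field_simp
  rw [key, div_le_iff₀ (by positivity)]
  calc t * (b - a) ^ 2 ≤ (a * b) ^ 2 * Real.sqrt ηN := by
        nlinarith [sq_nonneg (b - a), Real.sqrt_nonneg ηN,
          mul_le_mul_of_nonneg_left hba2 ht, mul_le_mul_of_nonneg_right hab2 (Real.sqrt_nonneg ηN)]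
    _ = Real.sqrt ηN * (a * b) ^ 2 := by ring

/-- Scalar estimate for the error term in the quarter-power factorization. -/
lemma scalar_error_quarter {η t : ℝ} (hη : 0 < η) (ht : 0 ≤ t) :
    (1 - 1 / sq4 (t + η) * sq4 t) * t * (1 - 1 / sq4 (t + η) * sq4 t) ≤ η := by
  have htη : 0 < t + η := by linarith
  have hd : 1 / sq4 (t + η) * sq4 t = sq4 (t / (t + η)) := by
    rw [one_div_mul_eq_div]
    rw [sq4, sq4, sq4, Real.sqrt_div ht, Real.sqrt_div (Real.sqrt_nonneg t)]
  set y := t / (t + η) with hy_def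
  have hy0 : 0 ≤ y := div_nonneg ht htη.le
  have hy1 : y ≤ 1 := by
    rw [hy_def, div_le_one htη]; linarith
  have hysq : y ≤ Real.sqrt y :=
    (Real.le_sqrt hy0 hy0).mpr (by nlinarith)
  have hy4 : y ≤ sq4 y := by
    refine hysq.trans ?_
    rw [sq4]
    exact (Real.le_sqrt (Real.sqrt_nonneg y) (Real.sqrt_nonneg y)).mpr
      (by rw [Real.sq_sqrt hy0]; exact hysq)
  have hsq41 : sq4 y ≤ 1 := by
    calc sq4 y ≤ sq4 1 := sq4_mono hy1
      _ = 1 := sq4_one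
  set ρ := 1 - 1 / sq4 (t + η) * sq4 t with hρ_def
  have hρy : ρ = 1 - sq4 y := by rw [hρ_def, hd]
  have hρ0 : 0 ≤ ρ := by rw [hρy]; linarith
  have hρ1 : ρ ≤ 1 := by rw [hρy]; nlinarith [sq4_nonneg y]
  have hρle : ρ ≤ 1 - y := by rw [hρy]; linarith
  have h1y : (1 - y) * (t + η) = η := by
    rw [hy_def]; field_simp; ring
  have hρ2 : ρ * (t + η) ≤ η := by
    calc ρ * (t + η) ≤ (1 - y) * (t + η) := by nlinarith
      _ = η := h1y
  nlinarith [mul_le_mul_of_nonneg_right hρ2 hρ0, mul_le_of_le_one_right hη.le hρ1,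
    mul_nonneg (mul_nonneg hη.le hρ0) hρ0]

/-- `|√x - √y| ≤ √c` when `|x - y| ≤ c`. -/
lemma abs_sqrt_sub_sqrt {x y c : ℝ} (hx : 0 ≤ x) (hy : 0 ≤ y)
    (hxy : |x - y| ≤ c) : |Real.sqrt x - Real.sqrt y| ≤ Real.sqrt c := by
  rcases le_total y x with h | h
  · rw [abs_of_nonneg (sub_nonneg.2 (Real.sqrt_le_sqrt h))]
    refine (sqrt_sub_sqrt_le hy h).trans (Real.sqrt_le_sqrt ?_)
    rwa [abs_of_nonneg (sub_nonneg.2 h)] at hxy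
  · rw [abs_of_nonpos (sub_nonpos.2 (Real.sqrt_le_sqrt h)), neg_sub]
    refine (sqrt_sub_sqrt_le hx h).trans (Real.sqrt_le_sqrt ?_)
    rwa [abs_of_nonpos (sub_nonpos.2 h), neg_sub] at hxy

/-- Scalar estimate for the Cauchy property of the sequence `Dₙ`. -/
lemma scalar_cauchy_D {η₁ η₂ ηN t : ℝ} (h1 : 0 < η₁) (h2 : 0 < η₂)
    (hN1 : η₁ ≤ ηN) (hN2 : η₂ ≤ ηN) (ht : 0 ≤ t) :
    (sq4 t / Real.sqrt (t + η₁) - sq4 t / Real.sqrt (t + η₂)) * t *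
      (sq4 t / Real.sqrt (t + η₁) - sq4 t / Real.sqrt (t + η₂)) ≤ Real.sqrt ηN := by
  have hηN : 0 < ηN := h1.trans_le hN1
  rcases eq_or_lt_of_le ht with h0 | htpos
  · rw [← h0]
    simp [sq4_zero, Real.sqrt_nonneg]
  set sA := Real.sqrt (t + η₁) with hsA
  set sB := Real.sqrt (t + η₂) with hsB
  have hApos : 0 < sA := Real.sqrt_pos.2 (by linarith)
  have hBpos : 0 < sB := Real.sqrt_pos.2 (by linarith)
  have hstpos : 0 < Real.sqrt t := Real.sqrt_pos.2 htpos
  have hAge : Real.sqrt t ≤ sA := Real.sqrt_le_sqrt (by linarith)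
  have hBge : Real.sqrt t ≤ sB := Real.sqrt_le_sqrt (by linarith)
  set c := 1 / sA - 1 / sB with hc_def
  have hexp : sq4 t / sA - sq4 t / sB = sq4 t * c := by
    rw [hc_def]; ring
  rw [hexp]
  have hgoal_eq : sq4 t * c * t * (sq4 t * c) = Real.sqrt t * t * c ^ 2 := by
    rw [show sq4 t * c * t * (sq4 t * c) = (sq4 t * sq4 t) * t * c ^ 2 by ring, sq4_mul_self]
  rw [hgoal_eq]
  rcases le_total t ηN with hcase | hcase
  · -- small t : use |c| ≤ 1 / √t
    have hc1 : |c| ≤ 1 / Real.sqrt t := by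
      rw [hc_def, abs_sub_le_iff]
      constructor
      · calc 1 / sA - 1 / sB ≤ 1 / sA := sub_le_self _ (by positivity)
          _ ≤ 1 / Real.sqrt t := one_div_le_one_div_of_le hstpos hAge
      · calc 1 / sB - 1 / sA ≤ 1 / sB := sub_le_self _ (by positivity)
          _ ≤ 1 / Real.sqrt t := one_div_le_one_div_of_le hstpos hBge
    have hc2 : c ^ 2 ≤ 1 / t := by
      calc c ^ 2 = |c| ^ 2 := (sq_abs c).symm
        _ ≤ (1 / Real.sqrt t) ^ 2 := pow_le_pow_left₀ (abs_nonneg c) hc1 2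
        _ = 1 / t := by rw [div_pow, one_pow, Real.sq_sqrt ht]
    calc Real.sqrt t * t * c ^ 2 ≤ Real.sqrt t * t * (1 / t) :=
          mul_le_mul_of_nonneg_left hc2 (by positivity)
      _ = Real.sqrt t := by field_simp
      _ ≤ Real.sqrt ηN := Real.sqrt_le_sqrt hcase
  · -- large t : use |c| ≤ √ηN / t
    have hBA : |sB - sA| ≤ Real.sqrt ηN := by
      refine abs_sqrt_sub_sqrt (by linarith) (by linarith) ?_
      rw [show t + η₂ - (t + η₁) = η₂ - η₁ by ring, abs_le]
      constructor <;> nlinarith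
    have htAB : t ≤ sA * sB := by
      calc t = Real.sqrt t * Real.sqrt t := (Real.mul_self_sqrt ht).symm
        _ ≤ sA * sB := mul_le_mul hAge hBge hstpos.le hApos.le
    have hc1 : |c| ≤ Real.sqrt ηN / t := by
      have hceq : c = (sB - sA) / (sA * sB) := by
        rw [hc_def]; field_simp
      rw [hceq, abs_div, abs_of_pos (mul_pos hApos hBpos)]
      exact div_le_div₀ (Real.sqrt_nonneg ηN) hBA htpos htAB
    have hc2 : c ^ 2 ≤ ηN / t ^ 2 := by
      calc c ^ 2 = |c| ^ 2 := (sq_abs c).symm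
        _ ≤ (Real.sqrt ηN / t) ^ 2 := pow_le_pow_left₀ (abs_nonneg c) hc1 2
        _ = ηN / t ^ 2 := by rw [div_pow, Real.sq_sqrt hηN.le]
    have e1 : Real.sqrt t * t * (ηN / t ^ 2) = ηN / Real.sqrt t := by
      have ht0 : t ≠ 0 := htpos.ne'
      have hst0 : Real.sqrt t ≠ 0 := hstpos.ne'
      field_simp
      linear_combination Real.sq_sqrt ht
    calc Real.sqrt t * t * c ^ 2 ≤ Real.sqrt t * t * (ηN / t ^ 2) :=
          mul_le_mul_of_nonneg_left hc2 (by positivity)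
      _ = ηN / Real.sqrt t := e1
      _ ≤ ηN / Real.sqrt ηN := by
          apply div_le_div_of_nonneg_left hηN.le (Real.sqrt_pos.2 hηN)
          exact Real.sqrt_le_sqrt hcase
      _ = Real.sqrt ηN := Real.div_sqrt

/-- Scalar estimate for the convergence `Dₙ* Dₙ → √F`. -/
lemma scalar_DD {η t : ℝ} (hη : 0 < η) (hη1 : η ≤ 1) (ht : 0 ≤ t) :
    |sq4 t / Real.sqrt (t + η) * t * (sq4 t / Real.sqrt (t + η)) - Real.sqrt t| ≤ sq4 η := by
  have htη : 0 < t + η := by linarith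
  have hsA : 0 < Real.sqrt (t + η) := Real.sqrt_pos.2 htη
  have hexp : sq4 t / Real.sqrt (t + η) * t * (sq4 t / Real.sqrt (t + η))
      = Real.sqrt t * t / (t + η) := by
    calc sq4 t / Real.sqrt (t + η) * t * (sq4 t / Real.sqrt (t + η))
        = sq4 t * sq4 t * t / (Real.sqrt (t + η) * Real.sqrt (t + η)) := by ring
      _ = Real.sqrt t * t / (t + η) := by rw [sq4_mul_self, Real.mul_self_sqrt htη.le]
  rw [hexp]
  have hkey : Real.sqrt t * t / (t + η) - Real.sqrt t = -(Real.sqrt t * η / (t + η)) := by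
    field_simp
    ring
  rw [hkey, abs_neg, abs_of_nonneg (by positivity)]
  rcases le_total t (Real.sqrt η) with hcase | hcase
  · calc Real.sqrt t * η / (t + η) ≤ Real.sqrt t * η / η := by
          apply div_le_div_of_nonneg_left (by positivity) hη
          linarith
      _ = Real.sqrt t := by field_simp
      _ ≤ Real.sqrt (Real.sqrt η) := Real.sqrt_le_sqrt hcase
      _ = sq4 η := rfl
  · have hst : sq4 η ≤ Real.sqrt t := by
      rw [sq4]
      exact Real.sqrt_le_sqrt hcase
    have hsq4pos : 0 < sq4 η := sq4_pos hη
    have h1 : Real.sqrt t * η / (t + η) ≤ η / Real.sqrt t := by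
      rw [div_le_div_iff₀ htη (lt_of_lt_of_le hsq4pos hst)]
      nlinarith [Real.mul_self_sqrt ht, Real.sqrt_nonneg t, hη.le]
    have h2 : η / Real.sqrt t ≤ η / sq4 η :=
      div_le_div_of_nonneg_left hη.le hsq4pos hst
    have h3 : η / sq4 η ≤ sq4 η := by
      rw [div_le_iff₀ hsq4pos, ← sq, sq4_sq]
      nlinarith [Real.sqrt_le_one.mpr hη1, Real.sq_sqrt hη.le, Real.sqrt_nonneg η]
    linarith

/-!
### Limit auxiliary lemmas
-/

lemma tendsto_sq4_one_div :
    Tendsto (fun N : ℕ => sq4 (1 / (N + 1))) atTop (𝓝 0) := by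
  have h0 : Tendsto (fun N : ℕ => (1 : ℝ) / (N + 1)) atTop (𝓝 0) :=
    tendsto_one_div_add_atTop_nhds_zero_nat
  have := (sq4_continuous.tendsto 0).comp h0
  simpa [sq4_zero, Function.comp_def] using this

lemma tendsto_sqrt_one_div :
    Tendsto (fun N : ℕ => Real.sqrt (1 / (N + 1))) atTop (𝓝 0) := by
  have h0 : Tendsto (fun N : ℕ => (1 : ℝ) / (N + 1)) atTop (𝓝 0) :=
    tendsto_one_div_add_atTop_nhds_zero_nat
  have := (Real.continuous_sqrt.tendsto 0).comp h0
  simpa [Function.comp_def] using this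

lemma one_div_nat_le {N n : ℕ} (h : N ≤ n) : (1 : ℝ) / (n + 1) ≤ 1 / (N + 1) := by
  apply one_div_le_one_div_of_le (by positivity)
  have : ((N : ℝ)) ≤ (n : ℝ) := Nat.cast_le.mpr h
  linarith

/-!
### C⋆-algebra auxiliary lemmas
-/

section CStarHelpers

variable [CStarAlgebra A] [PartialOrder A] [StarOrderedRing A]

/-- The fundamental norm estimate: if `x* x ≤ F` then
`‖x * f(F)‖² ≤ sup_{t ∈ σ(F)} f(t) t f(t)`. -/
lemma norm_conj_cfc_le (x F : A) (hF : 0 ≤ F) (hx : star x * x ≤ F)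
    (f : ℝ → ℝ) (hf : Continuous f) {c : ℝ} (hc : 0 ≤ c)
    (hbound : ∀ t ∈ spectrum ℝ F, f t * t * f t ≤ c) :
    ‖x * cfc f F‖ ≤ Real.sqrt c := by
  have hFsa : IsSelfAdjoint F := hF.isSelfAdjoint
  have hgsa : IsSelfAdjoint (cfc f F) := cfc_predicate f F
  set g := cfc f F with hg_def
  have h1 : star (x * g) * (x * g) = g * (star x * x) * g := by
    simp only [star_mul, hgsa.star_eq, mul_assoc]
  have h2 : g * (star x * x) * g ≤ g * F * g := by
    have := star_left_conjugate_le_conjugate hx g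
    rwa [hgsa.star_eq] at this
  have h0 : 0 ≤ g * (star x * x) * g := by
    have := star_left_conjugate_nonneg (star_mul_self_nonneg x) g
    rwa [hgsa.star_eq] at this
  have h3 : cfc (fun t : ℝ => f t * t * f t) F = g * F * g := by
    rw [cfc_mul (fun t : ℝ => f t * t) f F ((hf.mul continuous_id).continuousOn) hf.continuousOn,
      cfc_mul f (fun t : ℝ => t) F hf.continuousOn continuousOn_id, cfc_id' ℝ F hFsa]
  have h4 : ‖g * F * g‖ ≤ c := by
    rw [← h3]
    refine norm_cfc_le hc fun t ht => ?_
    have ht0 : 0 ≤ t := spectrum_nonneg_of_nonneg hF ht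
    rw [Real.norm_eq_abs, abs_of_nonneg (by
      have hrw : f t * t * f t = f t * f t * t := by ring
      rw [hrw]
      exact mul_nonneg (mul_self_nonneg _) ht0)]
    exact hbound t ht
  have h5 : ‖x * g‖ * ‖x * g‖ ≤ c := by
    rw [← CStarRing.norm_star_mul_self, h1]
    exact le_trans (CStarAlgebra.norm_le_norm_of_nonneg_of_le h0 h2) h4
  exact (Real.le_sqrt (norm_nonneg _) hc).mpr (by nlinarith)

/-- Rørdam's factorization lemma with exponent `1/4` : if `x* x ≤ F` then `x = u F^{1/4}`. -/
lemma exists_factor_quarter (x F : A) (hF : 0 ≤ F) (hx : star x * x ≤ F) :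
    ∃ u : A, x = u * cfc (fun t : ℝ => sq4 (max t 0)) F := by
  have hFsa : IsSelfAdjoint F := hF.isSelfAdjoint
  set p4 : ℝ → ℝ := fun t => sq4 (max t 0) with hp4_def
  have hp4c : Continuous p4 := sq4_continuous.comp (continuous_id.max continuous_const)
  set φ : ℕ → ℝ → ℝ := fun n t => 1 / sq4 (max t 0 + 1 / (n + 1)) with hφ_def
  have hηpos : ∀ n : ℕ, (0 : ℝ) < 1 / (n + 1) := fun n => by positivity
  have hφc : ∀ n, Continuous (φ n) := by
    intro n
    apply Continuous.div continuous_const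
      (sq4_continuous.comp ((continuous_id.max continuous_const).add continuous_const))
    intro t
    refine (sq4_pos ?_).ne'
    simp only [id_eq, Pi.add_apply]
    have h1 := le_max_right t 0
    have h2 := hηpos n
    linarith
  set u : ℕ → A := fun n => x * cfc (φ n) F with hu_def
  have hcauchy : CauchySeq u := by
    apply cauchySeq_of_le_tendsto_0 (fun N : ℕ => sq4 (1 / (N + 1))) _ tendsto_sq4_one_div
    intro n m N hn hm
    rw [dist_eq_norm]
    have hsub : u n - u m = x * cfc (fun t => φ n t - φ m t) F := by
      rw [hu_def]
      simp only []
      rw [cfc_sub (φ n) (φ m) F ((hφc n).continuousOn) ((hφc m).continuousOn), mul_sub]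
    rw [hsub]
    have hb : ∀ t ∈ spectrum ℝ F,
        (φ n t - φ m t) * t * (φ n t - φ m t) ≤ Real.sqrt (1 / (N + 1)) := by
      intro t ht
      have ht0 : 0 ≤ t := spectrum_nonneg_of_nonneg hF ht
      simp only [hφ_def, max_eq_left ht0]
      exact scalar_cauchy_quarter (hηpos n) (hηpos m) (one_div_nat_le hn)
        (one_div_nat_le hm) ht0
    exact norm_conj_cfc_le x F hF hx _ ((hφc n).sub (hφc m)) (Real.sqrt_nonneg _) hb
  obtain ⟨l, hl⟩ := cauchySeq_tendsto_of_complete hcauchy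
  refine ⟨l, ?_⟩
  have herr : ∀ n : ℕ, ‖x - u n * cfc p4 F‖ ≤ Real.sqrt (1 / (n + 1)) := by
    intro n
    have hmerge : u n * cfc p4 F = x * cfc (fun t => φ n t * p4 t) F := by
      rw [hu_def]
      simp only []
      rw [mul_assoc, ← cfc_mul (φ n) p4 F ((hφc n).continuousOn) hp4c.continuousOn]
    have hsub : x - u n * cfc p4 F = x * cfc (fun t => 1 - φ n t * p4 t) F := by
      rw [cfc_sub (fun _ : ℝ => (1 : ℝ)) (fun t => φ n t * p4 t) F
        continuousOn_const (((hφc n).mul hp4c).continuousOn), mul_sub,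
        cfc_const_one ℝ F hFsa, mul_one, ← hmerge]
    rw [hsub]
    have hb : ∀ t ∈ spectrum ℝ F,
        (1 - φ n t * p4 t) * t * (1 - φ n t * p4 t) ≤ 1 / (n + 1) := by
      intro t ht
      have ht0 : 0 ≤ t := spectrum_nonneg_of_nonneg hF ht
      simp only [hφ_def, hp4_def, max_eq_left ht0]
      exact scalar_error_quarter (hηpos n) ht0
    exact norm_conj_cfc_le x F hF hx _ (continuous_const.sub ((hφc n).mul hp4c))
      (by positivity) hb
  have hlim1 : Tendsto (fun n => u n * cfc p4 F) atTop (𝓝 (l * cfc p4 F)) :=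
    hl.mul_const _
  have hlim2 : Tendsto (fun n => u n * cfc p4 F) atTop (𝓝 x) := by
    rw [← tendsto_sub_nhds_zero_iff]
    apply squeeze_zero_norm (a := fun n : ℕ => Real.sqrt (1 / (n + 1)))
      (fun n => by rw [norm_sub_rev]; exact herr n) tendsto_sqrt_one_div
  exact tendsto_nhds_unique hlim2 hlim1

end CStarHelpers

/-- Scalar identity for the final cut-down step. -/
lemma scalar_sigma {d : ℝ} (hd : 0 < d) (θ : ℝ → ℝ) (hθ0 : ∀ t, t < d / 2 → θ t = 0) (t : ℝ) :
    θ t / Real.sqrt (max (t - d / 4) (d / 4)) * max (t - d / 4) 0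
      * (θ t / Real.sqrt (max (t - d / 4) (d / 4))) = θ t * θ t := by
  rcases le_or_gt (d / 2) t with hc | hc
  · have hmax : max (t - d / 4) (d / 4) = t - d / 4 := max_eq_left (by linarith)
    have hmax0 : max (t - d / 4) 0 = t - d / 4 := max_eq_left (by linarith)
    have hpos : (0:ℝ) < t - d / 4 := by linarith
    have hsq : Real.sqrt (t - d / 4) * Real.sqrt (t - d / 4) = t - d / 4 :=
      Real.mul_self_sqrt hpos.le
    have hsqrtpos : 0 < Real.sqrt (t - d / 4) := Real.sqrt_pos.mpr hpos
    rw [hmax, hmax0]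
    set s := Real.sqrt (t - d / 4) with hs
    rw [← hsq]
    field_simp
  · rw [hθ0 t hc]
    simp

section MainHelpers

variable [CStarAlgebra A] [PartialOrder A] [StarOrderedRing A]

lemma cutoff_nonneg (ε : ℝ) (c : A) : 0 ≤ cutoff ε c :=
  cfc_nonneg fun t _ => le_max_right _ _

lemma cutoff_cont (ε : ℝ) : Continuous (fun t : ℝ => max (t - ε) 0) :=
  (continuous_id.sub continuous_const).max continuous_const

lemma norm_sub_cutoff (c : A) (hc : 0 ≤ c) {ε : ℝ} (hε : 0 ≤ ε) :
    ‖c - cutoff ε c‖ ≤ ε := by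
  have hcsa : IsSelfAdjoint c := hc.isSelfAdjoint
  have h1 : c - cutoff ε c = cfc (fun t : ℝ => t - max (t - ε) 0) c := by
    rw [cfc_sub (fun t : ℝ => t) (fun t => max (t - ε) 0) c continuousOn_id
      (cutoff_cont ε).continuousOn, cfc_id' ℝ c hcsa, cutoff]
  rw [h1]
  refine norm_cfc_le hε fun t ht => ?_
  have ht0 : 0 ≤ t := spectrum_nonneg_of_nonneg hc ht
  rw [Real.norm_eq_abs, abs_le]
  rcases le_total (t - ε) 0 with h | h
  · rw [max_eq_right h]; constructor <;> linarith
  · rw [max_eq_left h]; constructor <;> linarith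

lemma cfc_conj_id (f : ℝ → ℝ) (hf : Continuous f) (a : A) (ha : IsSelfAdjoint a) :
    cfc f a * a * cfc f a = cfc (fun t => f t * t * f t) a := by
  calc cfc f a * a * cfc f a = cfc f a * cfc (fun t : ℝ => t) a * cfc f a := by
        rw [cfc_id' ℝ a ha]
    _ = cfc (fun t => f t * t * f t) a := by
        rw [← cfc_mul f (fun t : ℝ => t) a hf.continuousOn continuousOn_id,
          ← cfc_mul (fun t => f t * t) f a ((hf.mul continuous_id).continuousOn)
            hf.continuousOn]

end MainHelpers

set_option maxHeartbeats 2000000 in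
/-- Rørdam's characterization: `a ≾ b` iff for every `ε > 0` there are `δ > 0` and
`x ∈ A` with `(a - ε)₊ = x* (b - δ)₊ x`. -/
theorem cuntzSub_iff_cutoff_conjugate [CStarAlgebra A] [PartialOrder A] [StarOrderedRing A]
    (a b : A) (ha : 0 ≤ a) (hb : 0 ≤ b) :
    CuntzSub a b ↔
      ∀ ε : ℝ, 0 < ε → ∃ δ : ℝ, 0 < δ ∧ ∃ x : A, cutoff ε a = star x * cutoff δ b * x := by
  have hasa : IsSelfAdjoint a := ha.isSelfAdjoint
  have hbsa : IsSelfAdjoint b := hb.isSelfAdjoint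
  constructor
  · -- forward direction
    intro h ε hε
    obtain ⟨v, hv⟩ := h
    obtain ⟨N, hN⟩ := Metric.tendsto_atTop.mp hv (ε / 2) (by positivity)
    set w := v N with hw
    set r := ‖w * b * star w - a‖ with hr_def
    have hr : r < ε / 2 := by
      have := hN N le_rfl
      rwa [dist_eq_norm] at this
    set δ' := (ε / 2 - r) / (‖w‖ ^ 2 + 1) with hδ'_def
    have hδ'pos : 0 < δ' := by
      apply div_pos (by linarith) (by positivity)
    set B' := cutoff δ' b with hB'
    have hB'nonneg : 0 ≤ B' := cutoff_nonneg _ _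
    set a' := w * B' * star w with ha'
    have ha'nonneg : 0 ≤ a' := star_right_conjugate_nonneg hB'nonneg w
    have ha'sa : IsSelfAdjoint a' := ha'nonneg.isSelfAdjoint
    have hbB' : ‖b - B'‖ ≤ δ' := norm_sub_cutoff b hb hδ'pos.le
    have haa' : ‖a - a'‖ < ε / 2 := by
      have h1 : a - a' = (a - w * b * star w) + w * (b - B') * star w := by
        have h2 : w * (b - B') * star w = w * b * star w - w * B' * star w := by
          rw [mul_sub, sub_mul]
        rw [h2, ha']
        abel
      calc ‖a - a'‖ ≤ ‖a - w * b * star w‖ + ‖w * (b - B') * star w‖ := by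
            rw [h1]; exact norm_add_le _ _
        _ ≤ r + ‖w‖ * ‖b - B'‖ * ‖w‖ := by
            gcongr
            · rw [norm_sub_rev]
            · calc ‖w * (b - B') * star w‖ ≤ ‖w * (b - B')‖ * ‖star w‖ := norm_mul_le _ _
                _ ≤ ‖w‖ * ‖b - B'‖ * ‖star w‖ := by gcongr; exact norm_mul_le _ _
                _ = ‖w‖ * ‖b - B'‖ * ‖w‖ := by rw [norm_star]
        _ ≤ r + ‖w‖ ^ 2 * δ' := by
            have hw0 : (0:ℝ) ≤ ‖w‖ := norm_nonneg w
            nlinarith [hbB', norm_nonneg (b - B')]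
        _ < ε / 2 := by
            have : ‖w‖ ^ 2 * δ' < (‖w‖ ^ 2 + 1) * δ' := by nlinarith
            have hcancel : (‖w‖ ^ 2 + 1) * δ' = ε / 2 - r := by
              rw [hδ'_def]; field_simp
            linarith
    set ε' := ‖a - a'‖ with hε'
    have hε'lt : ε' < ε / 2 := haa'
    have hεε' : ε' < ε := by linarith
    have hgap : 0 < ε - ε' := by linarith
    have hε'0 : 0 ≤ ε' := norm_nonneg _
    -- the function g̃
    set gg : ℝ → ℝ := fun t => Real.sqrt (max (t - ε) 0 / max (t - ε') (ε - ε')) with hgg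
    have hggc : Continuous gg := Real.continuous_sqrt.comp (Continuous.div
      ((continuous_id.sub continuous_const).max continuous_const)
      ((continuous_id.sub continuous_const).max continuous_const)
      (fun t => (lt_of_lt_of_le hgap (le_max_right _ _)).ne'))
    set Ga := cfc gg a with hGa
    have hGasa : IsSelfAdjoint Ga := cfc_predicate _ _
    set e := cutoff ε a with he_def
    have hsub_cfc : a - algebraMap ℝ A ε' = cfc (fun t : ℝ => t - ε') a := by
      rw [cfc_sub (fun t : ℝ => t) (fun _ => ε') a continuousOn_id continuousOn_const,
        cfc_id' ℝ a hasa, cfc_const ε' a hasa]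
    have he : e = Ga * (a - algebraMap ℝ A ε') * Ga := by
      rw [hsub_cfc]
      calc e = cfc (fun t => gg t * (t - ε') * gg t) a := by
            rw [he_def, cutoff]
            congr 1
            funext t
            have hM : (0:ℝ) < max (t - ε') (ε - ε') := lt_of_lt_of_le hgap (le_max_right _ _)
            have hsq : gg t * gg t = max (t - ε) 0 / max (t - ε') (ε - ε') :=
              Real.mul_self_sqrt (div_nonneg (le_max_right _ _) hM.le)
            rw [show gg t * (t - ε') * gg t = gg t * gg t * (t - ε') by ring, hsq]
            rcases le_or_gt ε t with hc | hc
            · have h1 : max (t - ε) 0 = t - ε := max_eq_left (by linarith)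
              have h2 : max (t - ε') (ε - ε') = t - ε' := max_eq_left (by linarith)
              have h3 : (0:ℝ) < t - ε' := by linarith
              rw [h1, h2, div_mul_cancel₀ _ h3.ne']
            · have h1 : max (t - ε) 0 = 0 := max_eq_right (by linarith)
              rw [h1, zero_div, zero_mul]
        _ = Ga * cfc (fun t : ℝ => t - ε') a * Ga := by
            rw [hGa, ← cfc_mul gg (fun t : ℝ => t - ε') a hggc.continuousOn
              ((continuous_id.sub continuous_const).continuousOn),
              ← cfc_mul (fun t => gg t * (t - ε')) gg a
              ((hggc.mul (continuous_id.sub continuous_const)).continuousOn) hggc.continuousOn]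
    have hle1 : a - algebraMap ℝ A ε' ≤ a' := by
      have h1 : a - a' ≤ algebraMap ℝ A ε' :=
        IsSelfAdjoint.le_algebraMap_norm_self (hasa.sub ha'sa)
      exact sub_le_comm.mp h1
    -- Z and F
    set Bh := cfc (fun t : ℝ => Real.sqrt (max (t - δ') 0)) b with hBh
    have hBhc : Continuous (fun t : ℝ => Real.sqrt (max (t - δ') 0)) :=
      Real.continuous_sqrt.comp ((continuous_id.sub continuous_const).max continuous_const)
    have hBhsa : IsSelfAdjoint Bh := cfc_predicate _ _
    have hBh2 : Bh * Bh = B' := by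
      rw [hBh, hB', cutoff, ← cfc_mul _ _ b hBhc.continuousOn hBhc.continuousOn]
      congr 1
      funext t
      exact Real.mul_self_sqrt (le_max_right _ _)
    set Z := Ga * w * Bh with hZ
    set F := Z * star Z with hF
    have hFnonneg : 0 ≤ F := mul_star_self_nonneg Z
    have hFsa : IsSelfAdjoint F := hFnonneg.isSelfAdjoint
    have hstarZ : star Z = Bh * (star w * Ga) := by
      rw [hZ]
      simp [star_mul, hGasa.star_eq, hBhsa.star_eq, mul_assoc]
    have hZZ : F = Ga * a' * Ga := by
      rw [hF, hstarZ, hZ, ha']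
      simp only [mul_assoc]
      rw [← mul_assoc Bh Bh, hBh2]
    have heF : e ≤ F := by
      rw [he, hZZ]
      exact IsSelfAdjoint.conjugate_le_conjugate hle1 hGasa
    -- x0 = e^{1/2}
    set x0 := cfc (fun t : ℝ => Real.sqrt (max (t - ε) 0)) a with hx0
    have hx0c : Continuous (fun t : ℝ => Real.sqrt (max (t - ε) 0)) :=
      Real.continuous_sqrt.comp ((continuous_id.sub continuous_const).max continuous_const)
    have hx0sa : IsSelfAdjoint x0 := cfc_predicate _ _
    have hx0sq : x0 * x0 = e := by
      rw [hx0, he_def, cutoff, ← cfc_mul _ _ a hx0c.continuousOn hx0c.continuousOn]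
      congr 1
      funext t
      exact Real.mul_self_sqrt (le_max_right _ _)
    have hx0F : star x0 * x0 ≤ F := by
      rw [hx0sa.star_eq, hx0sq]; exact heF
    obtain ⟨u, hu⟩ := exists_factor_quarter x0 F hFnonneg hx0F
    -- the sequence Dₙ
    set ψ : ℕ → ℝ → ℝ := fun n t => sq4 (max t 0) / Real.sqrt (max t 0 + 1 / (n + 1)) with hψ
    have hηpos : ∀ n : ℕ, (0:ℝ) < 1 / (n + 1) := fun n => by positivity
    have hψc : ∀ n, Continuous (ψ n) := by
      intro n
      apply Continuous.div (sq4_continuous.comp (continuous_id.max continuous_const))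
        (Real.continuous_sqrt.comp ((continuous_id.max continuous_const).add continuous_const))
      intro t
      refine (Real.sqrt_pos.mpr ?_).ne'
      simp only [id_eq, Pi.add_apply]
      have h1 := le_max_right t 0
      have h2 := hηpos n
      linarith
    set Dn : ℕ → A := fun n => star Z * cfc (ψ n) F with hDn
    have hZsZF : star (star Z) * star Z ≤ F := by
      rw [star_star]
    have hDcauchy : CauchySeq Dn := by
      apply cauchySeq_of_le_tendsto_0 (fun N : ℕ => sq4 (1 / (N + 1))) _ tendsto_sq4_one_div
      intro n m N' hn hm
      rw [dist_eq_norm]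
      have hsub : Dn n - Dn m = star Z * cfc (fun t => ψ n t - ψ m t) F := by
        show star Z * cfc (ψ n) F - star Z * cfc (ψ m) F = _
        rw [cfc_sub (ψ n) (ψ m) F ((hψc n).continuousOn) ((hψc m).continuousOn), mul_sub]
      rw [hsub]
      refine norm_conj_cfc_le (star Z) F hFnonneg hZsZF _ ((hψc n).sub (hψc m))
        (Real.sqrt_nonneg _) ?_
      intro t ht
      have ht0 : 0 ≤ t := spectrum_nonneg_of_nonneg hFnonneg ht
      simp only [hψ, Pi.sub_apply, max_eq_left ht0]
      exact scalar_cauchy_D (hηpos n) (hηpos m) (one_div_nat_le hn) (one_div_nat_le hm) ht0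
    obtain ⟨D, hD⟩ := cauchySeq_tendsto_of_complete hDcauchy
    have hDnDn : ∀ n, star (Dn n) * Dn n = cfc (fun t => ψ n t * t * ψ n t) F := by
      intro n
      have hψsa : IsSelfAdjoint (cfc (ψ n) F) := cfc_predicate _ _
      have h1 : star (Dn n) = cfc (ψ n) F * Z := by
        show star (star Z * cfc (ψ n) F) = _
        rw [star_mul, star_star, hψsa.star_eq]
      calc star (Dn n) * Dn n = cfc (ψ n) F * Z * (star Z * cfc (ψ n) F) := by rw [h1]
        _ = cfc (ψ n) F * (Z * star Z) * cfc (ψ n) F := by simp only [mul_assoc]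
        _ = cfc (ψ n) F * F * cfc (ψ n) F := by rw [← hF]
        _ = cfc (fun t => ψ n t * t * ψ n t) F := cfc_conj_id (ψ n) (hψc n) F hFsa
    have hDD : star D * D = cfc (fun t : ℝ => Real.sqrt (max t 0)) F := by
      have hlim1 : Tendsto (fun n => star (Dn n) * Dn n) atTop (𝓝 (star D * D)) :=
        hD.star.mul hD
      have hlim2 : Tendsto (fun n => star (Dn n) * Dn n) atTop
          (𝓝 (cfc (fun t : ℝ => Real.sqrt (max t 0)) F)) := by
        rw [show (fun n => star (Dn n) * Dn n)
          = fun n => cfc (fun t => ψ n t * t * ψ n t) F from funext hDnDn]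
        rw [← tendsto_sub_nhds_zero_iff]
        apply squeeze_zero_norm (a := fun n : ℕ => sq4 (1 / (n + 1))) (fun n => ?_)
          tendsto_sq4_one_div
        have hsub : cfc (fun t => ψ n t * t * ψ n t) F
            - cfc (fun t : ℝ => Real.sqrt (max t 0)) F
            = cfc (fun t => ψ n t * t * ψ n t - Real.sqrt (max t 0)) F := by
          rw [cfc_sub (fun t => ψ n t * t * ψ n t) (fun t : ℝ => Real.sqrt (max t 0)) F
            (((hψc n).mul continuous_id |>.mul (hψc n)).continuousOn)
            ((Real.continuous_sqrt.comp (continuous_id.max continuous_const)).continuousOn)]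
        rw [hsub]
        refine norm_cfc_le (sq4_nonneg _) fun t ht => ?_
        have ht0 : 0 ≤ t := spectrum_nonneg_of_nonneg hFnonneg ht
        rw [Real.norm_eq_abs]
        simp only [hψ, max_eq_left ht0]
        refine scalar_DD (hηpos n) ?_ ht0
        rw [div_le_one (by positivity)]
        have : (0:ℝ) ≤ (n : ℝ) := Nat.cast_nonneg n
        linarith
      exact tendsto_nhds_unique hlim1 hlim2
    -- W
    set W := D * star u with hW
    have hp4sa : IsSelfAdjoint (cfc (fun t : ℝ => sq4 (max t 0)) F) := cfc_predicate _ _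
    have hWW : star W * W = e := by
      have h1 : star W * W = u * (star D * D) * star u := by
        rw [hW]
        simp [star_mul, star_star, mul_assoc]
      rw [h1, hDD]
      have h2 : cfc (fun t : ℝ => Real.sqrt (max t 0)) F
          = cfc (fun t : ℝ => sq4 (max t 0)) F * cfc (fun t : ℝ => sq4 (max t 0)) F := by
        rw [← cfc_mul (fun t : ℝ => sq4 (max t 0)) (fun t : ℝ => sq4 (max t 0)) F
          ((sq4_continuous.comp (continuous_id.max continuous_const)).continuousOn :
            ContinuousOn (fun t : ℝ => sq4 (max t 0)) _)
          ((sq4_continuous.comp (continuous_id.max continuous_const)).continuousOn :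
            ContinuousOn (fun t : ℝ => sq4 (max t 0)) _)]
        congr 1
        funext t
        exact (sq4_mul_self _).symm
      rw [h2]
      calc u * (cfc (fun t : ℝ => sq4 (max t 0)) F * cfc (fun t : ℝ => sq4 (max t 0)) F)
            * star u
          = (u * cfc (fun t : ℝ => sq4 (max t 0)) F)
            * star (u * cfc (fun t : ℝ => sq4 (max t 0)) F) := by
            rw [star_mul, hp4sa.star_eq]
            simp only [mul_assoc]
        _ = x0 * star x0 := by rw [← hu]
        _ = e := by rw [hx0sa.star_eq, hx0sq]
    -- the cut-down function θ
    set θ : ℝ → ℝ := fun t => min 1 (max (2 / δ' * t - 1) 0) with hθ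
    have hθc : Continuous θ := continuous_const.min
      (((continuous_const.mul continuous_id).sub continuous_const).max continuous_const)
    set Tb := cfc θ b with hTb
    have hTbsa : IsSelfAdjoint Tb := cfc_predicate _ _
    have hθ_eq_one : ∀ t : ℝ, δ' ≤ t → θ t = 1 := by
      intro t hct
      have h1 : (1:ℝ) ≤ 2 / δ' * t - 1 := by
        rw [le_sub_iff_add_le, div_mul_eq_mul_div, le_div_iff₀ hδ'pos]
        linarith
      show min 1 (max (2 / δ' * t - 1) 0) = 1
      rw [max_eq_left (by linarith), min_eq_left h1]
    have hθ_eq_zero : ∀ t : ℝ, t < δ' / 2 → θ t = 0 := by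
      intro t hct
      have h1 : 2 / δ' * t - 1 ≤ 0 := by
        rw [sub_nonpos, div_mul_eq_mul_div, div_le_one hδ'pos]
        linarith
      show min 1 (max (2 / δ' * t - 1) 0) = 0
      rw [max_eq_right h1]
      exact min_eq_right zero_le_one
    have hTbBh : Tb * Bh = Bh := by
      rw [hTb, hBh, ← cfc_mul θ _ b hθc.continuousOn hBhc.continuousOn]
      congr 1
      funext t
      rcases le_or_gt δ' t with hc | hc
      · rw [hθ_eq_one t hc, one_mul]
      · rw [max_eq_right (by linarith), Real.sqrt_zero, mul_zero]
    have hTbZ : Tb * star Z = star Z := by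
      rw [hstarZ, ← mul_assoc, hTbBh]
    have hTbD : Tb * D = D := by
      have h1 : ∀ n, Tb * Dn n = Dn n := by
        intro n
        show Tb * (star Z * cfc (ψ n) F) = star Z * cfc (ψ n) F
        rw [← mul_assoc, hTbZ]
      have hlim1 : Tendsto (fun n => Tb * Dn n) atTop (𝓝 (Tb * D)) := hD.const_mul _
      have hlim2 : Tendsto (fun n => Tb * Dn n) atTop (𝓝 D) := by
        rw [show (fun n => Tb * Dn n) = Dn from funext h1]
        exact hD
      exact tendsto_nhds_unique hlim1 hlim2
    have hTbW : Tb * W = W := by rw [hW, ← mul_assoc, hTbD]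
    -- final assembly
    set σf : ℝ → ℝ := fun t => θ t / Real.sqrt (max (t - δ' / 4) (δ' / 4)) with hσf
    have hδ'4 : (0:ℝ) < δ' / 4 := by linarith
    have hσfc : Continuous σf := by
      apply hθc.div (Real.continuous_sqrt.comp
        ((continuous_id.sub continuous_const).max continuous_const))
      intro t
      refine (Real.sqrt_pos.mpr ?_).ne'
      simp only [id_eq]
      exact lt_of_lt_of_le hδ'4 (le_max_right _ _)
    have hσfsa : IsSelfAdjoint (cfc σf b) := cfc_predicate _ _
    refine ⟨δ' / 4, hδ'4, cfc σf b * W, ?_⟩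
    have hmid : cfc σf b * cutoff (δ' / 4) b * cfc σf b = Tb * Tb := by
      rw [cutoff, hTb,
        ← cfc_mul σf _ b hσfc.continuousOn (cutoff_cont (δ' / 4)).continuousOn,
        ← cfc_mul (fun t => σf t * max (t - δ' / 4) 0) σf b
          ((hσfc.mul (cutoff_cont (δ' / 4))).continuousOn) hσfc.continuousOn,
        ← cfc_mul θ θ b hθc.continuousOn hθc.continuousOn]
      congr 1
      funext t
      exact scalar_sigma hδ'pos θ hθ_eq_zero t
    have hfinal : star (cfc σf b * W) * cutoff (δ' / 4) b * (cfc σf b * W) = e := by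
      calc star (cfc σf b * W) * cutoff (δ' / 4) b * (cfc σf b * W)
          = star W * (cfc σf b * cutoff (δ' / 4) b * cfc σf b) * W := by
            rw [star_mul, hσfsa.star_eq]
            simp only [mul_assoc]
        _ = star W * (Tb * Tb) * W := by rw [hmid]
        _ = star (Tb * W) * (Tb * W) := by
            have hsw : star (Tb * W) = star W * Tb := by
              rw [star_mul, hTbsa.star_eq]
            rw [hsw]
            simp only [mul_assoc]
        _ = star W * W := by rw [hTbW]
        _ = e := hWW
    exact hfinal.symm
  · -- backward direction
    intro H
    have hH := fun n : ℕ => H (1 / (n + 1)) (by positivity)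
    choose δ hδpos xs hxs using hH
    set γ : ℕ → ℝ → ℝ := fun n t => Real.sqrt (max (t - δ n) 0 / max t (δ n)) with hγdef
    have hγc : ∀ n, Continuous (γ n) := fun n =>
      Real.continuous_sqrt.comp (Continuous.div
        ((continuous_id.sub continuous_const).max continuous_const)
        (continuous_id.max continuous_const)
        (fun t => (lt_of_lt_of_le (hδpos n) (le_max_right t (δ n))).ne'))
    have hγsa : ∀ n, IsSelfAdjoint (cfc (γ n) b) := fun n => cfc_predicate _ _
    have hmid : ∀ n, cfc (γ n) b * b * cfc (γ n) b = cutoff (δ n) b := by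
      intro n
      rw [cfc_conj_id (γ n) (hγc n) b hbsa, cutoff]
      congr 1
      funext t
      show γ n t * t * γ n t = _
      have hM : (0:ℝ) < max t (δ n) := lt_of_lt_of_le (hδpos n) (le_max_right t (δ n))
      have hsq : γ n t * γ n t = max (t - δ n) 0 / max t (δ n) :=
        Real.mul_self_sqrt (div_nonneg (le_max_right _ _) hM.le)
      rw [show γ n t * t * γ n t = γ n t * γ n t * t by ring, hsq]
      rcases le_or_gt (δ n) t with hc | hc
      · have h1 : max t (δ n) = t := max_eq_left hc
        have h2 : max (t - δ n) 0 = t - δ n := max_eq_left (by linarith)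
        have ht0 : (0:ℝ) < t := lt_of_lt_of_le (hδpos n) hc
        rw [h1, h2, div_mul_cancel₀ _ ht0.ne']
      · have h2 : max (t - δ n) 0 = 0 := max_eq_right (by linarith)
        rw [h2, zero_div, zero_mul]
    refine ⟨fun n => star (xs n) * cfc (γ n) b, ?_⟩
    have hkey : ∀ n, (star (xs n) * cfc (γ n) b) * b * star (star (xs n) * cfc (γ n) b)
        = cutoff (1 / (n + 1)) a := by
      intro n
      have h1 : star (star (xs n) * cfc (γ n) b) = cfc (γ n) b * xs n := by
        rw [star_mul, star_star, (hγsa n).star_eq]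
      rw [h1, hxs n, ← hmid n]
      simp only [mul_assoc]
    rw [show (fun n : ℕ => (star (xs n) * cfc (γ n) b) * b * star (star (xs n) * cfc (γ n) b))
      = fun n : ℕ => cutoff (1 / (n + 1 : ℝ)) a from funext hkey]
    rw [← tendsto_sub_nhds_zero_iff]
    apply squeeze_zero_norm (a := fun n : ℕ => (1:ℝ) / (n + 1)) (fun n => ?_)
      tendsto_one_div_add_atTop_nhds_zero_nat
    rw [norm_sub_rev]
    exact norm_sub_cutoff a ha (by positivity)
end

section
/- Let 0 → I → A →^π A/I → 0 be a short exact sequence of C*-algebras, and suppose I has a quasi-central approximate unit (p_n) consisting of projections. Let a, b be positive elements of A. If for every ε > 0 there exists N such that ((1−p_n) a (1−p_n) − ε)₊ ≾ (1−p_n) b (1−p_n) in A for all n ≥ N, then π(a) ≾ π(b) in A/I. -/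
open Filter Topology
open scoped ENNReal NNReal

variable {A : Type*}

open scoped CStarAlgebra

/-- If `(1-pₙ) a (1-pₙ)` is eventually `ε`-Cuntz-below `(1-pₙ) b (1-pₙ)` for all `ε`,
where `(pₙ)` is a quasi-central approximate unit of projections for `I = ker π`, then
`π(a) ≾ π(b)` in `A/I`. -/
theorem quotient_cuntzSub_of_corner {B : Type*} [CStarAlgebra A] [CStarAlgebra B]
    [PartialOrder A] [StarOrderedRing A]
    (π : A →⋆ₐ[ℂ] B) (hsurj : Function.Surjective π)
    (I : TwoSidedIdeal A) (hIc : IsClosed (I : Set A)) (hker : ∀ x : A, π x = 0 ↔ x ∈ I)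
    (p : ℕ → A) (hproj : ∀ n, IsSelfAdjoint (p n) ∧ IsIdempotentElem (p n) ∧ p n ∈ I)
    (happrox : ∀ x ∈ I, Tendsto (fun n => p n * x) atTop (nhds x) ∧
      Tendsto (fun n => x * p n) atTop (nhds x))
    (hqc : ∀ x : A, Tendsto (fun n => ‖p n * x - x * p n‖) atTop (nhds 0))
    (a b : A) (ha : 0 ≤ a) (hb : 0 ≤ b)
    (h : ∀ ε : ℝ, 0 < ε → ∃ N : ℕ, ∀ n ≥ N,
      CuntzSub (cutoff ε ((1 - p n) * a * (1 - p n))) ((1 - p n) * b * (1 - p n))) :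
    CuntzSub (π a) (π b) := by
  have hπc : Continuous π := map_continuous π
  have hπp : ∀ n, π (p n) = 0 := fun n => (hker (p n)).mpr (hproj n).2.2
  have hπcorner : ∀ (n : ℕ) (x : A), π ((1 - p n) * x * (1 - p n)) = π x := by
    intro n x
    simp [map_mul, map_sub, hπp]
  have haSA : IsSelfAdjoint a := ha.isSelfAdjoint
  have hπa : IsSelfAdjoint (π a) := haSA.map π
  -- spectrum of `π a` is nonnegative
  have hspec : ∀ x ∈ spectrum ℝ (π a), 0 ≤ x := by
    intro x hx
    exact spectrum_nonneg_of_nonneg ha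
      (AlgHom.spectrum_apply_subset ((π : A →⋆ₐ[ℂ] B).restrictScalars ℝ) a hx)
  -- key step: for every ε > 0, `cutoff ε (π a) ≾ π b`
  have key : ∀ ε : ℝ, 0 < ε → CuntzSub (cutoff ε (π a)) (π b) := by
    intro ε hε
    obtain ⟨N, hN⟩ := h ε hε
    obtain ⟨v, hv⟩ := hN N le_rfl
    set c : A := (1 - p N) * a * (1 - p N) with hc
    have h1 : IsSelfAdjoint (1 - p N) := (IsSelfAdjoint.one A).sub (hproj N).1
    have hcsa : IsSelfAdjoint c := by
      have := haSA.conjugate (1 - p N)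
      rwa [h1.star_eq] at this
    have hfc : Continuous fun t : ℝ => max (t - ε) 0 :=
      (continuous_id.sub continuous_const).max continuous_const
    have hmap : π (cutoff ε c) = cutoff ε (π a) := by
      have := π.map_cfc (fun t : ℝ => max (t - ε) 0) c
        (hf := hfc.continuousOn) (hφ := hπc) (ha := hcsa) (hφa := hcsa.map π)
      rw [cutoff, this, hπcorner N a, cutoff]
    refine ⟨fun k => π (v k), ?_⟩
    have htend := (hπc.tendsto _).comp hv
    rw [hmap] at htend
    simpa only [Function.comp_def, map_mul, map_sub, map_one, map_star, hπp,
      sub_zero, one_mul, mul_one] using htend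
  -- the cutoff approximates `π a` in norm
  have hbound : ∀ ε : ℝ, 0 < ε → ‖cutoff ε (π a) - π a‖ ≤ ε := by
    intro ε hε
    have heq : cutoff ε (π a) - π a = cfc (fun t : ℝ => max (t - ε) 0 - t) (π a) := by
      have := cfc_sub (fun t : ℝ => max (t - ε) 0) (fun t : ℝ => t) (π a)
        (((continuous_id.sub continuous_const).max continuous_const).continuousOn)
        continuous_id.continuousOn
      rw [cfc_id' ℝ (π a)] at this
      exact this.symm
    rw [heq]
    refine norm_cfc_le hε.le fun x hx => ?_
    have hx0 := hspec x hx
    rw [Real.norm_eq_abs, abs_le]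
    rcases le_total x ε with hxε | hxε
    · rw [max_eq_right (by linarith)]; constructor <;> linarith
    · rw [max_eq_left (by linarith)]; constructor <;> linarith
  -- diagonal argument
  choose w hw using fun k : ℕ => key (1 / ((k : ℝ) + 1)) (by positivity)
  have hsel : ∀ k : ℕ, ∃ m : ℕ,
      ‖w k m * π b * star (w k m) - cutoff (1 / ((k : ℝ) + 1)) (π a)‖ < 1 / ((k : ℝ) + 1) := by
    intro k
    obtain ⟨M, hM⟩ := Metric.tendsto_atTop.mp (hw k) (1 / ((k : ℝ) + 1)) (by positivity)
    exact ⟨M, by simpa [dist_eq_norm] using hM M le_rfl⟩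
  choose m hm using hsel
  refine ⟨fun k => w k (m k), ?_⟩
  rw [tendsto_iff_norm_sub_tendsto_zero]
  refine squeeze_zero (g := fun k : ℕ => 1 / ((k : ℝ) + 1) + 1 / ((k : ℝ) + 1))
    (fun k => norm_nonneg _) (fun k => ?_) ?_
  · show ‖w k (m k) * π b * star (w k (m k)) - π a‖ ≤ _
    calc ‖w k (m k) * π b * star (w k (m k)) - π a‖
        = ‖(w k (m k) * π b * star (w k (m k)) - cutoff (1 / ((k : ℝ) + 1)) (π a))
            + (cutoff (1 / ((k : ℝ) + 1)) (π a) - π a)‖ := by rw [sub_add_sub_cancel]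
      _ ≤ ‖w k (m k) * π b * star (w k (m k)) - cutoff (1 / ((k : ℝ) + 1)) (π a)‖
            + ‖cutoff (1 / ((k : ℝ) + 1)) (π a) - π a‖ := norm_add_le _ _
      _ ≤ 1 / ((k : ℝ) + 1) + 1 / ((k : ℝ) + 1) :=
          add_le_add (hm k).le (hbound _ (by positivity))
  · simpa using
      (tendsto_one_div_add_atTop_nhds_zero_nat (𝕜 := ℝ)).add
          (tendsto_one_div_add_atTop_nhds_zero_nat (𝕜 := ℝ))
end

section
/- Let 0 → I → A →^π A/I → 0 be a short exact sequence of C*-algebras, and suppose I has a quasi-central approximate unit (p_n) consisting of projections. Let a, b be positive elements of A with π(a) ≾ π(b) in A/I. Then for every ε > 0 there exists N such that ((1−p_n) a (1−p_n) − ε)₊ ≾ (1−p_n) b (1−p_n) in A for all n ≥ N. -/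
open Filter Topology
open scoped ENNReal NNReal

variable {A : Type*}

section AuxLemmas
variable [CStarAlgebra A] [PartialOrder A] [StarOrderedRing A]
set_option linter.unusedSectionVars false

lemma cuntz_const (x b : A) : CuntzSub (x * b * star x) b := ⟨fun _ => x, tendsto_const_nhds⟩

lemma cuntz_trans {a b c : A} (h1 : CuntzSub a b) (h2 : CuntzSub b c) : CuntzSub a c := by
  obtain ⟨v, hv⟩ := h1
  obtain ⟨w, hw⟩ := h2
  have key : ∀ k : ℕ, ∃ j : ℕ, ‖w j * c * star (w j) - b‖ < (1/(k+1) : ℝ)/((‖v k‖+1)^2) := by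
    intro k
    have hpos : (0:ℝ) < (1/(k+1) : ℝ)/((‖v k‖+1)^2) := by positivity
    obtain ⟨N, hN⟩ := (Metric.tendsto_atTop.mp hw) _ hpos
    exact ⟨N, by simpa [dist_eq_norm] using hN N le_rfl⟩
  choose j hj using key
  refine ⟨fun k => v k * w (j k), ?_⟩
  rw [tendsto_iff_norm_sub_tendsto_zero]
  have hb : ∀ k : ℕ, ‖v k * w (j k) * c * star (v k * w (j k)) - a‖ ≤
      (1/(k+1) : ℝ) + ‖v k * b * star (v k) - a‖ := by
    intro k
    have hid : v k * w (j k) * c * star (v k * w (j k)) - a =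
        v k * (w (j k) * c * star (w (j k)) - b) * star (v k) + (v k * b * star (v k) - a) := by
      simp only [star_mul]
      noncomm_ring
    rw [hid]
    refine (norm_add_le _ _).trans (add_le_add ?_ le_rfl)
    calc ‖v k * (w (j k) * c * star (w (j k)) - b) * star (v k)‖
        ≤ ‖v k * (w (j k) * c * star (w (j k)) - b)‖ * ‖star (v k)‖ := norm_mul_le _ _
      _ ≤ (‖v k‖ * ‖w (j k) * c * star (w (j k)) - b‖) * ‖star (v k)‖ := by
          gcongr; exact norm_mul_le _ _
      _ ≤ (‖v k‖+1) * ((1/(k+1) : ℝ)/((‖v k‖+1)^2)) * (‖v k‖+1) := by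
          rw [norm_star]
          have h1 := norm_nonneg (v k)
          have h2 := (hj k).le
          have h3 := norm_nonneg (w (j k) * c * star (w (j k)) - b)
          nlinarith
      _ = (1/(k+1) : ℝ) := by
          have : (‖v k‖+1) ≠ 0 := by positivity
          field_simp
  refine squeeze_zero (fun k => norm_nonneg _) hb ?_
  have l1 : Tendsto (fun k : ℕ => (1/(k+1) : ℝ)) atTop (nhds 0) := by
    exact tendsto_one_div_add_atTop_nhds_zero_nat
  have l2 := (tendsto_iff_norm_sub_tendsto_zero.mp hv)
  simpa using l1.add l2


lemma key_estimate {a b : A} (ha : 0 ≤ a) (hab : a ≤ b) {δ : ℝ} (hδ : 0 < δ) :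
    ‖(cfc Real.sqrt a * cfc (fun t : ℝ => (Real.sqrt (max t 0 + δ))⁻¹) b) * b *
      star (cfc Real.sqrt a * cfc (fun t : ℝ => (Real.sqrt (max t 0 + δ))⁻¹) b) - a‖ ≤ δ := by
  have hb : 0 ≤ b := ha.trans hab
  have hbsa : IsSelfAdjoint b := .of_nonneg hb
  have hasa : IsSelfAdjoint a := .of_nonneg ha
  set g : ℝ → ℝ := fun t => (Real.sqrt (max t 0 + δ))⁻¹ with hg
  have hgc : Continuous g := by
    apply Continuous.inv₀
    · fun_prop
    · intro t
      have : 0 < max t 0 + δ := by positivity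
      positivity
  set s : A := cfc Real.sqrt a with hs
  set cg : A := cfc g b with hcg
  have hssa : IsSelfAdjoint s := cfc_predicate _ _
  have hcgsa : IsSelfAdjoint cg := cfc_predicate _ _
  have hstar : star (s * cg) = cg * s := by rw [star_mul, hssa.star_eq, hcgsa.star_eq]
  have hXpos : ∀ t : ℝ, 0 < max t 0 + δ := fun t => by positivity
  have hh1 : ∀ t : ℝ, g t * t * g t = t / (max t 0 + δ) := by
    intro t
    rw [hg]
    have h1 : (Real.sqrt (max t 0 + δ))⁻¹ * t * (Real.sqrt (max t 0 + δ))⁻¹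
        = t * (Real.sqrt (max t 0 + δ) * Real.sqrt (max t 0 + δ))⁻¹ := by
      rw [mul_inv]; ring
    rw [h1, Real.mul_self_sqrt (hXpos t).le, div_eq_mul_inv]
  -- m := cg * b * cg
  have hm : cg * b * cg = cfc (fun t : ℝ => g t * t * g t) b := by
    conv_lhs => rw [← cfc_id ℝ b]
    rw [← cfc_mul _ _ b hgc.continuousOn (continuousOn_id), ← cfc_mul _ _ b
      (by fun_prop) hgc.continuousOn]
    rfl
  -- s * s = a
  have hss : s * s = a := by
    rw [hs, ← cfc_mul _ _ a (by fun_prop) (by fun_prop)]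
    have : cfc (fun t : ℝ => Real.sqrt t * Real.sqrt t) a = cfc (id : ℝ → ℝ) a := by
      apply cfc_congr
      intro t ht
      have ht0 : 0 ≤ t := spectrum_nonneg_of_nonneg ha ht
      simp [Real.mul_self_sqrt ht0]
    rw [this, cfc_id ℝ a]
  set j : ℝ → ℝ := fun t => Real.sqrt (1 - t / (max t 0 + δ)) with hj
  have hjarg : ∀ t : ℝ, 0 ≤ 1 - t / (max t 0 + δ) := by
    intro t
    have h1 : t / (max t 0 + δ) ≤ 1 := by
      apply div_le_one_of_le₀
      · have := le_max_left t 0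
        linarith
      · exact (hXpos t).le
    linarith
  have hjc : Continuous j := by
    apply Real.continuous_sqrt.comp
    apply Continuous.sub continuous_const
    apply Continuous.div continuous_id (by fun_prop)
    exact fun t => (hXpos t).ne'
  set m : A := cfc j b with hmdef
  have hmsa : IsSelfAdjoint m := cfc_predicate _ _
  have hmm : m * m = 1 - cg * b * cg := by
    rw [hmdef, ← cfc_mul _ _ b hjc.continuousOn hjc.continuousOn]
    have e1 : cfc (fun t : ℝ => j t * j t) b
        = cfc (fun t : ℝ => 1 - t / (max t 0 + δ)) b := by
      apply cfc_congr
      intro t _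
      exact Real.mul_self_sqrt (hjarg t)
    rw [e1, hm]
    have e2 : cfc (fun t : ℝ => g t * t * g t) b = cfc (fun t : ℝ => t / (max t 0 + δ)) b :=
      cfc_congr fun t _ => hh1 t
    rw [e2, cfc_sub _ _ b (by fun_prop) (by
      apply Continuous.continuousOn
      apply Continuous.div continuous_id (by fun_prop)
      exact fun t => (hXpos t).ne'), cfc_const 1 b, map_one]
  -- main computation
  have hcomp : (s * cg) * b * star (s * cg) - a = -(s * (m * m) * s) := by
    rw [hstar, hmm]
    have : s * cg * b * (cg * s) = s * (cg * b * cg) * s := by noncomm_ring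
    rw [this]
    have : s * (1 - cg * b * cg) * s = s * s - s * (cg * b * cg) * s := by noncomm_ring
    rw [this, hss]
    abel
  rw [hcomp, norm_neg]
  -- C* norm juggling: ‖s * (m*m) * s‖ = ‖m*s‖² = ‖m * a * m‖
  have hz1 : ‖s * (m * m) * s‖ = ‖m * s‖ * ‖m * s‖ := by
    have : s * (m * m) * s = star (m * s) * (m * s) := by
      rw [star_mul, hssa.star_eq, hmsa.star_eq]; noncomm_ring
    rw [this, CStarRing.norm_star_mul_self]
  have hz2 : ‖m * s‖ * ‖m * s‖ = ‖m * a * m‖ := by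
    rw [← CStarRing.norm_self_mul_star (x := m * s)]
    congr 1
    rw [star_mul, hssa.star_eq, hmsa.star_eq, ← hss]
    noncomm_ring
  rw [hz1, hz2]
  -- order bound
  have hman : 0 ≤ m * a * m := by
    have := star_left_conjugate_nonneg ha m
    rwa [hmsa.star_eq] at this
  have hmam : m * a * m ≤ m * b * m := by
    have := star_left_conjugate_le_conjugate hab m
    rwa [hmsa.star_eq] at this
  refine (CStarAlgebra.norm_le_norm_of_nonneg_of_le hman hmam).trans ?_
  -- ‖m * b * m‖ ≤ δ
  have hmbm : m * b * m = cfc (fun t : ℝ => j t * t * j t) b := by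
    conv_lhs => rw [← cfc_id ℝ b]
    rw [← cfc_mul _ _ b hjc.continuousOn (continuousOn_id), ← cfc_mul _ _ b
      (by fun_prop) hjc.continuousOn]
    rfl
  rw [hmbm]
  apply norm_cfc_le hδ.le
  intro t ht
  have ht0 : 0 ≤ t := spectrum_nonneg_of_nonneg hb ht
  have hmax : max t 0 = t := max_eq_left ht0
  have harg : 0 ≤ 1 - t / (t + δ) := by have := hjarg t; rwa [hmax] at this
  have hjt : j t * t * j t = t * (1 - t / (t + δ)) := by
    rw [hj]
    simp only [hmax]
    nlinarith [Real.mul_self_sqrt harg]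
  rw [Real.norm_eq_abs, hjt]
  have htδ : 0 < t + δ := by linarith
  have h1 : t * (1 - t / (t + δ)) = t * δ / (t + δ) := by field_simp; ring
  rw [h1, abs_of_nonneg (by positivity)]
  rw [div_le_iff₀ htδ]
  nlinarith

lemma cuntz_of_le {a b : A} (ha : 0 ≤ a) (hab : a ≤ b) : CuntzSub a b := by
  refine ⟨fun k => cfc Real.sqrt a * cfc (fun t : ℝ => (Real.sqrt (max t 0 + (1/(k+1) : ℝ)))⁻¹) b, ?_⟩
  rw [tendsto_iff_norm_sub_tendsto_zero]
  refine squeeze_zero (fun k => norm_nonneg _) (fun k => key_estimate ha hab (by positivity)) ?_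
  exact tendsto_one_div_add_atTop_nhds_zero_nat


lemma cuntz_cutoff_of_norm_lt {a b : A} (ha : 0 ≤ a) (hb : 0 ≤ b) {ε : ℝ}
    (hab : ‖a - b‖ < ε) : CuntzSub (cutoff ε a) b := by
  have hasa : IsSelfAdjoint a := .of_nonneg ha
  have hbsa : IsSelfAdjoint b := .of_nonneg hb
  set δ : ℝ := ‖a - b‖ with hδ
  have hδ0 : 0 ≤ δ := norm_nonneg _
  have hδε : δ < ε := hab
  set c0 : ℝ := (ε - δ) / 2 with hc0
  have hc0pos : 0 < c0 := by rw [hc0]; linarith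
  set f : ℝ → ℝ := fun t => Real.sqrt (max (t - ε) 0 / max (t - δ) c0) with hf
  have hden : ∀ t : ℝ, 0 < max (t - δ) c0 := fun t => lt_max_of_lt_right hc0pos
  have hfc : Continuous f := by
    apply Real.continuous_sqrt.comp
    exact Continuous.div (by fun_prop) (by fun_prop) fun t => (hden t).ne'
  set F : A := cfc f a with hF
  have hFsa : IsSelfAdjoint F := cfc_predicate _ _
  -- a - δ • 1 ≤ b
  have hle : a - algebraMap ℝ A δ ≤ b := by
    have h1 : a - b ≤ algebraMap ℝ A δ := by
      have := IsSelfAdjoint.le_algebraMap_norm_self (a := a - b) (hasa.sub hbsa)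
      rwa [← hδ] at this
    have h2 : a - algebraMap ℝ A δ ≤ (a - b) + b - algebraMap ℝ A δ := by
      simp
    calc a - algebraMap ℝ A δ = (a - b) - algebraMap ℝ A δ + b := by abel
      _ ≤ algebraMap ℝ A δ - algebraMap ℝ A δ + b := by gcongr
      _ = b := by abel
  -- cutoff ε a = F * (a - δ1) * F
  have hkey : cutoff ε a = F * (a - algebraMap ℝ A δ) * F := by
    have e0 : a - algebraMap ℝ A δ = cfc (fun t : ℝ => t - δ) a := by
      rw [cfc_sub _ _ a (by fun_prop) (by fun_prop), cfc_id' ℝ a, cfc_const δ a]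
    rw [e0, hF, ← cfc_mul _ _ a (by fun_prop) (by fun_prop),
      ← cfc_mul _ _ a (by fun_prop) (by fun_prop)]
    unfold cutoff
    apply cfc_congr
    intro t _
    rcases le_or_gt t ε with h | h
    · have : max (t - ε) 0 = 0 := max_eq_right (by linarith)
      simp [hf, this]
    · have h1 : max (t - ε) 0 = t - ε := max_eq_left (by linarith)
      have h2 : max (t - δ) c0 = t - δ := by
        apply max_eq_left
        rw [hc0]; linarith
      have h3 : 0 ≤ (t - ε) / (t - δ) := by
        apply div_nonneg (by linarith) (by linarith)
      simp only [hf, h1, h2]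
      have hmw := Real.mul_self_sqrt h3
      have htδ : t - δ ≠ 0 := sub_ne_zero.mpr (by linarith)
      symm
      calc Real.sqrt ((t - ε) / (t - δ)) * (t - δ) * Real.sqrt ((t - ε) / (t - δ))
          = (Real.sqrt ((t - ε) / (t - δ)) * Real.sqrt ((t - ε) / (t - δ))) * (t - δ) := by ring
        _ = (t - ε) / (t - δ) * (t - δ) := by rw [hmw]
        _ = t - ε := div_mul_cancel₀ _ htδ
  have hconj : cutoff ε a ≤ F * b * F := by
    rw [hkey]
    have := star_left_conjugate_le_conjugate hle F
    rwa [hFsa.star_eq] at this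
  have hcut0 : 0 ≤ cutoff ε a := by
    unfold cutoff
    apply cfc_nonneg
    intro t _
    positivity
  refine cuntz_trans (cuntz_of_le hcut0 hconj) ?_
  have : F * b * F = F * b * star F := by rw [hFsa.star_eq]
  rw [this]
  exact cuntz_const F b


-- pure ring identity
lemma ring_expand {R : Type*} [Ring R] (q w w' b a c d d' : R) (hq : q * q = q)
    (hd : w * q = q * w + d) (hd' : q * w' = w' * q + d') :
    (q * w) * (q * b * q) * (w' * q) - q * a * q =
      q * ((w * b * w' - a) - c) * q + q * c * q
        + (q * w * (b * (d' * q)) + q * d * (b * (w' * q)) + q * d * (b * (d' * q))) := by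
  have e1 : q * (w * q) = q * w + q * d := by rw [hd, mul_add, ← mul_assoc, hq]
  have e2 : (q * w') * q = w' * q + d' * q := by rw [hd', add_mul, mul_assoc, hq]
  have e3 : (q * w) * (q * b * q) * (w' * q) = (q * (w * q)) * b * ((q * w') * q) := by
    noncomm_ring
  rw [e3, e1, e2]
  noncomm_ring

-- norm of selfadjoint idempotent complement
lemma norm_le_one_of_proj {q : A} (hsa : IsSelfAdjoint q) (hq : q * q = q) : ‖q‖ ≤ 1 := by
  have h := CStarRing.norm_star_mul_self (x := q)
  rw [hsa.star_eq, hq] at h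
  nlinarith [norm_nonneg q]

-- the clamp trick: find c ∈ ker π close to x
lemma close_to_kernel {B : Type*} [CStarAlgebra B] (π : A →⋆ₐ[ℂ] B)
    {x : A} (hx : IsSelfAdjoint x) :
    ∃ c : A, π c = 0 ∧ ‖x - c‖ ≤ ‖π x‖ := by
  rcases subsingleton_or_nontrivial B with hB | hB
  · exact ⟨x, Subsingleton.elim _ _, by simp⟩
  set r : ℝ := ‖π x‖ with hr
  have hr0 : 0 ≤ r := norm_nonneg _
  set φ : ℝ → ℝ := fun t => max (min t r) (-r) with hφ
  have hφc : Continuous φ := by fun_prop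
  have hπcont : Continuous π :=
    AddMonoidHomClass.continuous_of_bound π 1 fun y => by
      rw [one_mul]; exact NonUnitalStarAlgHom.norm_apply_le π y
  have hπxsa : IsSelfAdjoint (π x) := hx.map π
  refine ⟨cfc (fun t : ℝ => t - φ t) x, ?_, ?_⟩
  · rw [StarAlgHom.map_cfc π _ x (by fun_prop) hπcont]
    have : cfc (fun t : ℝ => t - φ t) (π x) = cfc (fun _ : ℝ => (0:ℝ)) (π x) := by
      apply cfc_congr
      intro t ht
      have habs : |t| ≤ r := by
        have := spectrum.norm_le_norm_of_mem ht
        rwa [Real.norm_eq_abs] at this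
      have h1 : min t r = t := min_eq_left (le_of_abs_le habs)
      have h2 : max t (-r) = t := max_eq_left (neg_le_of_abs_le habs)
      simp [hφ, h1, h2]
    rw [this]
    simp
  · have e0 : cfc (fun t : ℝ => t - φ t) x = x - cfc φ x := by
      rw [cfc_sub _ _ x (by fun_prop) hφc.continuousOn, cfc_id' ℝ x]
    have e1 : x - cfc (fun t : ℝ => t - φ t) x = cfc φ x := by rw [e0]; abel
    rw [e1]
    apply norm_cfc_le hr0
    intro t _
    rw [Real.norm_eq_abs, hφ]
    simp only [abs_le]
    constructor
    · exact le_max_right _ _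
    · exact max_le (min_le_right t r) (neg_le_self hr0)


end AuxLemmas

/-- If `π(a) ≾ π(b)` in `A/I`, where `I = ker π` has a quasi-central approximate unit
`(pₙ)` of projections, then for every `ε > 0` eventually
`((1-pₙ) a (1-pₙ) - ε)₊ ≾ (1-pₙ) b (1-pₙ)` in `A`. -/
theorem corner_cuntzSub_of_quotient {B : Type*} [CStarAlgebra A] [CStarAlgebra B]
    [PartialOrder A] [StarOrderedRing A]
    (π : A →⋆ₐ[ℂ] B) (hsurj : Function.Surjective π)
    (I : TwoSidedIdeal A) (hIc : IsClosed (I : Set A)) (hker : ∀ x : A, π x = 0 ↔ x ∈ I)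
    (p : ℕ → A) (hproj : ∀ n, IsSelfAdjoint (p n) ∧ IsIdempotentElem (p n) ∧ p n ∈ I)
    (happrox : ∀ x ∈ I, Tendsto (fun n => p n * x) atTop (nhds x) ∧
      Tendsto (fun n => x * p n) atTop (nhds x))
    (hqc : ∀ x : A, Tendsto (fun n => ‖p n * x - x * p n‖) atTop (nhds 0))
    (a b : A) (ha : 0 ≤ a) (hb : 0 ≤ b) (h : CuntzSub (π a) (π b)) :
    ∀ ε : ℝ, 0 < ε → ∃ N : ℕ, ∀ n ≥ N,
      CuntzSub (cutoff ε ((1 - p n) * a * (1 - p n))) ((1 - p n) * b * (1 - p n)) := by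
  intro ε hε
  obtain ⟨v, hv⟩ := h
  have hε4 : (0:ℝ) < ε/4 := by linarith
  obtain ⟨k, hk⟩ : ∃ k, ‖v k * π b * star (v k) - π a‖ < ε/4 := by
    obtain ⟨N, hN⟩ := (Metric.tendsto_atTop.mp hv) _ hε4
    exact ⟨N, by simpa [dist_eq_norm] using hN N le_rfl⟩
  obtain ⟨w, hw⟩ := hsurj (v k)
  have hbsa : IsSelfAdjoint b := .of_nonneg hb
  have hasa : IsSelfAdjoint a := .of_nonneg ha
  have hxsa : IsSelfAdjoint (w * b * star w - a) := by
    have h1 : IsSelfAdjoint (w * b * star w) := by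
      rw [IsSelfAdjoint, star_mul, star_mul, star_star, hbsa.star_eq, mul_assoc]
    exact h1.sub hasa
  have hπx : ‖π (w * b * star w - a)‖ < ε/4 := by
    have e : π (w * b * star w - a) = v k * π b * star (v k) - π a := by
      simp [map_sub, map_mul, map_star, hw]
    rw [e]; exact hk
  obtain ⟨c, hc0, hcx⟩ := close_to_kernel π hxsa
  have hcI : c ∈ I := (hker c).mp hc0
  have hxc : ‖(w * b * star w - a) - c‖ < ε/4 := lt_of_le_of_lt hcx hπx
  -- limits
  have hpc : Tendsto (fun n => ‖c - p n * c‖) atTop (nhds 0) := by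
    have h1 := tendsto_iff_norm_sub_tendsto_zero.mp (happrox c hcI).1
    simpa [norm_sub_rev] using h1
  have hd : Tendsto (fun n => ‖p n * w - w * p n‖) atTop (nhds 0) := hqc w
  set M : ℝ := ‖b‖ * (2 * ‖w‖ + 1) + 1 with hM
  have hMpos : (0:ℝ) < M := by positivity
  have hη : (0:ℝ) < min 1 (ε/(8*M)) := by positivity
  have hev : ∀ᶠ n in atTop, ‖p n * w - w * p n‖ < min 1 (ε/(8*M)) ∧ ‖c - p n * c‖ < ε/8 := by
    filter_upwards [hd.eventually (gt_mem_nhds hη),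
      hpc.eventually (gt_mem_nhds (by linarith : (0:ℝ) < ε/8))] with n h1 h2
    exact ⟨h1, h2⟩
  obtain ⟨N, hN⟩ := eventually_atTop.mp hev
  refine ⟨N, fun n hn => ?_⟩
  obtain ⟨hdn, hcn⟩ := hN n hn
  obtain ⟨hpsa, hpid, hpI⟩ := hproj n
  set q : A := 1 - p n with hqdef
  have hqsa : IsSelfAdjoint q := (IsSelfAdjoint.one (R := A)).sub hpsa
  have hqq : q * q = q := by
    have hpp : p n * p n = p n := hpid
    calc q * q = 1 - p n - p n + p n * p n := by rw [hqdef]; noncomm_ring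
      _ = q := by rw [hpp, hqdef]; abel
  have hqn : ‖q‖ ≤ 1 := norm_le_one_of_proj hqsa hqq
  set d : A := p n * w - w * p n with hddef
  set u : A := q * w with hu
  set T : A := u * (q * b * q) * star u with hT
  have hstaru : star u = star w * q := by rw [hu, star_mul, hqsa.star_eq]
  have hident : T - q * a * q =
      q * ((w * b * star w - a) - c) * q + q * c * q
        + (q * w * (b * (star d * q)) + q * d * (b * (star w * q))
            + q * d * (b * (star d * q))) := by
    rw [hT, hstaru, hu]
    refine ring_expand q w (star w) b a c d (star d) hqq ?_ ?_
    · rw [hqdef, hddef]; noncomm_ring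
    · rw [hqdef, hddef, star_sub, star_mul, star_mul, hpsa.star_eq]; noncomm_ring
  -- norm bounds
  have key1 : ∀ y : A, ‖q * y * q‖ ≤ ‖y‖ := by
    intro y
    calc ‖q * y * q‖ ≤ ‖q * y‖ * ‖q‖ := norm_mul_le _ _
      _ ≤ (‖q‖ * ‖y‖) * ‖q‖ := by
          exact mul_le_mul_of_nonneg_right (norm_mul_le _ _) (norm_nonneg _)
      _ ≤ (1 * ‖y‖) * 1 := by
          exact mul_le_mul (mul_le_mul_of_nonneg_right hqn (norm_nonneg _)) hqn
            (norm_nonneg _) (by positivity)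
      _ = ‖y‖ := by ring
  have key3 : ∀ y z : A, ‖q * y * (b * (z * q))‖ ≤ ‖y‖ * ‖b‖ * ‖z‖ := by
    intro y z
    have h1 : ‖q * y‖ ≤ ‖y‖ := by
      refine (norm_mul_le _ _).trans ?_
      nlinarith [norm_nonneg y, norm_nonneg q]
    have h2 : ‖z * q‖ ≤ ‖z‖ := by
      refine (norm_mul_le _ _).trans ?_
      nlinarith [norm_nonneg z, norm_nonneg q]
    calc ‖q * y * (b * (z * q))‖ ≤ ‖q * y‖ * ‖b * (z * q)‖ := norm_mul_le _ _
      _ ≤ ‖y‖ * (‖b‖ * ‖z‖) := by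
          refine mul_le_mul h1 ((norm_mul_le _ _).trans ?_) (norm_nonneg _) (norm_nonneg _)
          exact mul_le_mul_of_nonneg_left h2 (norm_nonneg b)
      _ = ‖y‖ * ‖b‖ * ‖z‖ := by ring
  have ht2 : ‖q * c * q‖ ≤ ‖c - p n * c‖ := by
    have e : q * c = c - p n * c := by rw [hqdef, sub_mul, one_mul]
    calc ‖q * c * q‖ ≤ ‖q * c‖ * ‖q‖ := norm_mul_le _ _
      _ ≤ ‖q * c‖ * 1 := mul_le_mul_of_nonneg_left hqn (norm_nonneg _)
      _ = ‖c - p n * c‖ := by rw [mul_one, e]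
  have hd1 : ‖d‖ ≤ 1 := le_of_lt (lt_of_lt_of_le hdn (min_le_left _ _))
  have hdM : ‖d‖ * M < ε/8 := by
    have h1 : ‖d‖ < ε/(8*M) := lt_of_lt_of_le hdn (min_le_right _ _)
    calc ‖d‖ * M < (ε/(8*M)) * M := by
          exact mul_lt_mul_of_pos_right h1 hMpos
      _ = ε/8 := by field_simp
  have hterm345 : ‖q * w * (b * (star d * q)) + q * d * (b * (star w * q))
      + q * d * (b * (star d * q))‖ ≤ ‖d‖ * M := by
    have h3 := key3 w (star d)
    have h4 := key3 d (star w)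
    have h5 := key3 d (star d)
    rw [norm_star] at h3 h4 h5
    refine (norm_add₃_le).trans ?_
    have hw0 := norm_nonneg w
    have hb0 := norm_nonneg b
    have hd0 := norm_nonneg d
    calc ‖q * w * (b * (star d * q))‖ + ‖q * d * (b * (star w * q))‖
          + ‖q * d * (b * (star d * q))‖
        ≤ ‖w‖ * ‖b‖ * ‖d‖ + ‖d‖ * ‖b‖ * ‖w‖ + ‖d‖ * ‖b‖ * ‖d‖ := by linarith
      _ ≤ ‖d‖ * M := by
          rw [hM]
          nlinarith [mul_nonneg (mul_nonneg hd0 hb0) (sub_nonneg.mpr hd1)]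
  have hTnorm : ‖T - q * a * q‖ < ε := by
    rw [hident]
    refine lt_of_le_of_lt (norm_add_le _ _) ?_
    have h12 : ‖q * ((w * b * star w - a) - c) * q + q * c * q‖
        ≤ ‖(w * b * star w - a) - c‖ + ‖c - p n * c‖ :=
      (norm_add_le _ _).trans (add_le_add (key1 _) ht2)
    refine lt_of_le_of_lt (add_le_add h12 hterm345) ?_
    have hsum := add_lt_add (add_lt_add hxc hcn) hdM
    refine lt_of_lt_of_le hsum ?_
    linarith
  -- positivity
  have hqaq : 0 ≤ q * a * q := by
    have := star_left_conjugate_nonneg ha q; rwa [hqsa.star_eq] at this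
  have hqbq : 0 ≤ q * b * q := by
    have := star_left_conjugate_nonneg hb q; rwa [hqsa.star_eq] at this
  have hT0 : 0 ≤ T := by
    rw [hT]; exact star_right_conjugate_nonneg hqbq u
  have step1 : CuntzSub (cutoff ε (q * a * q)) T := by
    refine cuntz_cutoff_of_norm_lt hqaq hT0 ?_
    rwa [norm_sub_rev] at hTnorm
  have step2 : CuntzSub T (q * b * q) := by
    rw [hT]; exact cuntz_const u (q * b * q)
  exact cuntz_trans step1 step2
end
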